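/- arXiv:1909.13372 — 2 statements merged into one kernel-verified Lean document; each statement's English description precedes it below -/
import Mathlib

section
/- (Embedding criterion) A nonempty L-structure M admits an L-embedding into some model of a first-order theory T if and only if M satisfies every universal L-sentence that is a logical consequence of T (i.e., M ⊨ T_∀). -/
open FirstOrder FirstOrder.Language

universe u v

variable {L : FirstOrder.Language.{u, v}}

/-- A formula is *universal* if it has the form `∀ ȳ, χ` with `χ` quantifier-free. -/
def IsUniversalFormula {α : Type*} (φ : L.Formula α) : Prop :=
  ∃ (n : ℕ) (χ : L.BoundedFormula α n), χ.IsQF ∧ φ = χ.alls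

/-- A formula is *existential* if it has the form `∃ ȳ, χ` with `χ` quantifier-free. -/
def IsExistentialFormula {α : Type*} (φ : L.Formula α) : Prop :=
  ∃ (n : ℕ) (χ : L.BoundedFormula α n), χ.IsQF ∧ φ = χ.exs

/-- A theory is *model complete* if every embedding between models of it is elementary. -/
def IsModelComplete (T : L.Theory) : Prop :=
  ∀ (M N : Type (max u v)) [L.Structure M] [L.Structure N] [Nonempty M] [Nonempty N],
    M ⊨ T → N ⊨ T → ∀ (f : M ↪[L] N) (n : ℕ) (φ : L.Formula (Fin n)) (x : Fin n → M),
      φ.Realize (f ∘ x) ↔ φ.Realize x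

/-- `M` is *existentially closed in `N` via* the embedding `f` if every existential formula
with parameters from `M` that holds in `N` (of the images) already holds in `M`. -/
def IsECVia {M N : Type (max u v)} [L.Structure M] [L.Structure N] (f : M ↪[L] N) : Prop :=
  ∀ (k : ℕ) (φ : L.Formula (Fin k)), IsExistentialFormula φ →
    ∀ x : Fin k → M, φ.Realize (f ∘ x) → φ.Realize x

/-- `M` is *existentially closed for* the theory `T` if `M ⊨ T` and `M` is existentially
closed in every model of `T` via every embedding. -/
def IsECFor (T : L.Theory) (M : Type (max u v)) [L.Structure M] [Nonempty M] : Prop :=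
  M ⊨ T ∧ ∀ (N : Type (max u v)) [L.Structure N] [Nonempty N], N ⊨ T →
    ∀ f : M ↪[L] N, IsECVia f

/-- `T_∀` : the set of universal sentences that are logical consequences of `T`. -/
def universalPart (T : L.Theory) : L.Theory :=
  {φ : L.Sentence | IsUniversalFormula φ ∧ T ⊨ᵇ φ}

/-- `Tstar` is a *model companion* of `T`: `Tstar` is model complete, every model of `T`
embeds into a model of `Tstar`, and every model of `Tstar` embeds into a model of `T`. -/
def IsModelCompanion (T Tstar : L.Theory) : Prop :=
  IsModelComplete Tstar ∧
  (∀ (M : Type (max u v)) [L.Structure M] [Nonempty M], M ⊨ T →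
     ∃ (N : Type (max u v)) (_ : L.Structure N) (_ : Nonempty N),
       N ⊨ Tstar ∧ Nonempty (M ↪[L] N)) ∧
  (∀ (M : Type (max u v)) [L.Structure M] [Nonempty M], M ⊨ Tstar →
     ∃ (N : Type (max u v)) (_ : L.Structure N) (_ : Nonempty N),
       N ⊨ T ∧ Nonempty (M ↪[L] N))

open FirstOrder.Language.Structure

open FirstOrder.Language.BoundedFormula in
lemma isQF_mapTermRel {L' : Language} {α β : Type*} {n : ℕ}
    {ft : ∀ n, L.Term (α ⊕ Fin n) → L'.Term (β ⊕ Fin n)}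
    {fr : ∀ n, L.Relations n → L'.Relations n}
    {φ : L.BoundedFormula α n} (h : φ.IsQF) :
    (φ.mapTermRel ft fr fun _ => id).IsQF := by
  induction h with
  | falsum => exact isQF_bot
  | of_isAtomic hA =>
    cases hA with
    | equal t₁ t₂ => exact (IsAtomic.equal _ _).isQF
    | rel R ts => exact (IsAtomic.rel _ _).isQF
  | imp _ _ ih1 ih2 => exact ih1.imp ih2

open FirstOrder.Language.BoundedFormula in
lemma isQF_equivSentence_symm {α : Type*} {φ : L[[α]].Sentence} (h : φ.IsQF) :
    (Formula.equivSentence.symm φ).IsQF := by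
  have h1 : (BoundedFormula.constantsVarsEquiv φ).IsQF := by
    exact isQF_mapTermRel (ft := fun _ t => Term.constantsVarsEquivLeft t)
      (fr := fun _ R => Equiv.sumEmpty _ _ R) h
  show ((BoundedFormula.constantsVarsEquiv.trans
      (BoundedFormula.relabelEquiv (Equiv.sumEmpty _ _))) φ).IsQF
  rw [Equiv.trans_apply, relabelEquiv, mapTermRelEquiv_apply]
  exact isQF_mapTermRel h1

open FirstOrder.Language.BoundedFormula in
lemma isQF_restrictFreeVar {α β : Type*} [DecidableEq α] :
    ∀ {n : ℕ} {φ : L.BoundedFormula α n}, φ.IsQF →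
      ∀ f : φ.freeVarFinset → β, (φ.restrictFreeVar f).IsQF := by
  intro n φ h
  induction h with
  | falsum => exact fun f => isQF_bot
  | of_isAtomic hA =>
    cases hA with
    | equal t₁ t₂ => exact fun f => (IsAtomic.equal _ _).isQF
    | rel R ts => exact fun f => (IsAtomic.rel _ _).isQF
  | imp _ _ ih1 ih2 => exact fun f => (ih1 _).imp (ih2 _)

open FirstOrder.Language.BoundedFormula in
lemma isUniversalFormula_iAlls {α β γ : Type*} [Finite γ] (f : α → β ⊕ γ)
    {φ : L.Formula α} (h : φ.IsQF) : IsUniversalFormula ((φ.relabel f).iAlls γ) :=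
  ⟨_, _, (h.relabel _).relabel _, rfl⟩

/-- Finite conjunction of sentences. -/
def conjList : List (L.Sentence) → L.Sentence
  | [] => ⊤
  | φ :: l => φ ⊓ conjList l

open FirstOrder.Language.BoundedFormula in
lemma isQF_conjList : ∀ l : List (L.Sentence), (∀ φ ∈ l, φ.IsQF) → (conjList l).IsQF
  | [], _ => IsQF.top
  | φ :: l, h =>
    (h φ List.mem_cons_self).inf
      (isQF_conjList l fun ψ hψ => h ψ (List.mem_cons_of_mem _ hψ))

lemma realize_conjList {S : Type*} [L.Structure S] :
    ∀ l : List (L.Sentence), S ⊨ conjList l ↔ ∀ φ ∈ l, S ⊨ φ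
  | [] => by simp [conjList, Sentence.Realize]
  | φ :: l => by
    have ih := realize_conjList (S := S) l
    simp only [conjList, Sentence.Realize, Formula.realize_inf] at *
    rw [ih]
    constructor
    · rintro ⟨h1, h2⟩ ψ hψ
      rcases List.mem_cons.1 hψ with rfl | h
      · exact h1
      · exact h2 _ h
    · intro h
      exact ⟨h _ List.mem_cons_self, fun ψ hψ => h _ (List.mem_cons_of_mem _ hψ)⟩

section Key

variable (T : L.Theory) (M : Type (max u v)) [L.Structure M] [Nonempty M]

open Classical in
/-- Key step: if `M ⊨ universalPart T`, then `T` (as an `L[[M]]`-theory) together with any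
quantifier-free `L[[M]]`-sentence true in `M` is satisfiable. -/
lemma key_satisfiable (hM : M ⊨ universalPart T) (χ : L[[M]].Sentence) (hQF : χ.IsQF)
    (hMχ : M ⊨ χ) : (((L.lhomWithConstants M).onTheory T) ∪ {χ}).IsSatisfiable := by
  classical
  by_contra hunsat
  set θ : L.Formula M := Formula.equivSentence.symm χ with hθ
  have hθQF : θ.IsQF := isQF_equivSentence_symm hQF
  set γ := ↥((↑θ.freeVarFinset : Set M)) with hγ
  have hsub : ↑θ.freeVarFinset ⊆ (↑θ.freeVarFinset : Set M) := subset_rfl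
  set θres : L.Formula γ := θ.restrictFreeVar (Set.inclusion hsub) with hθres
  have hresQF : θres.IsQF := isQF_restrictFreeVar hθQF _
  set σ : L.Sentence := ((θres.not).relabel (Sum.inr : γ → Empty ⊕ γ)).iAlls γ with hσ
  have hσuniv : IsUniversalFormula σ := isUniversalFormula_iAlls _ hresQF.not
  have hTσ : T ⊨ᵇ σ := by
    rw [Theory.models_sentence_iff]
    intro S
    have hkey : ∀ i : γ → S, ¬ Formula.Realize θres i := by
      intro i hreal
      set c : M → S := fun m =>
        if h : m ∈ θ.freeVarFinset then i ⟨m, Finset.mem_coe.2 h⟩ else Classical.arbitrary S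
        with hc
      have hci : c ∘ ((↑) : (↑θ.freeVarFinset : Set M) → M) = i := by
        funext a
        have ha : (a : M) ∈ θ.freeVarFinset := Finset.mem_coe.1 a.2
        simp only [hc, Function.comp_apply, dif_pos ha]
      have hθc : θ.Realize c := by
        refine (BoundedFormula.realize_restrictFreeVar' hsub (v := c)
          (xs := default)).1 ?_
        rw [show θ.restrictFreeVar (Set.inclusion hsub) = θres from rfl, hci]
        try exact hreal
      apply hunsat
      letI : (constantsOn M).Structure S := constantsOn.structure c
      have hSχ : χ.Realize S := by
        rw [← Formula.realize_equivSentence_symm_con S χ]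
        exact hθc
      have hST' : S ⊨ (L.lhomWithConstants M).onTheory T :=
        (LHom.onTheory_model _ _).2 S.is_model
      have : S ⊨ ((L.lhomWithConstants M).onTheory T) ∪ {χ} :=
        Theory.model_union_iff.2 ⟨hST', Theory.model_singleton_iff.2 hSχ⟩
      exact Theory.Model.isSatisfiable S
    show Formula.Realize σ (default : Empty → S)
    rw [hσ, Formula.realize_iAlls]
    intro i
    simp only [Formula.realize_relabel, Formula.realize_not, Function.comp_def]
    intro hreal
    refine hkey i ?_
    have hival : (fun a : γ => Sum.elim (default : Empty → S) i (Sum.inr a)) = i := by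
      funext a; simp
    rw [← hival]
    exact hreal
  haveI := hM
  have hMσ : M ⊨ σ :=
    (universalPart T).realize_sentence_of_mem (show σ ∈ universalPart T from ⟨hσuniv, hTσ⟩)
  have hθM : θ.Realize (fun a => ((L.con a : L[[M]].Constants) : M)) :=
    (Formula.realize_equivSentence_symm_con M χ).2 hMχ
  have hresid : Formula.Realize θres (Subtype.val : γ → M) := by
    refine (BoundedFormula.realize_restrictFreeVar' hsub (v := (id : M → M))
      (xs := (default : Fin 0 → M))).2 ?_
    exact hθM
  have hMσ' : Formula.Realize σ (default : Empty → M) := hMσ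
  rw [hσ, Formula.realize_iAlls] at hMσ'
  have := hMσ' Subtype.val
  simp only [Formula.realize_relabel, Formula.realize_not, Function.comp_def] at this
  apply this
  have hival : (fun a : γ => Sum.elim (default : Empty → M) Subtype.val (Sum.inr a))
      = (Subtype.val : γ → M) := by funext a; simp
  rw [hival]
  exact hresid

end Key

section Main

variable (T : L.Theory) (M : Type (max u v)) [L.Structure M] [Nonempty M]

/-- The quantifier-free diagram of `M`. -/
def qfDiagram : L[[M]].Theory := {φ : L[[M]].Sentence | φ.IsQF ∧ M ⊨ φ}

lemma qfDiagram_satisfiable (hM : M ⊨ universalPart T) :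
    (((L.lhomWithConstants M).onTheory T) ∪ qfDiagram M).IsSatisfiable := by
  classical
  rw [Theory.isSatisfiable_iff_isFinitelySatisfiable]
  intro s0 hs0
  set s₂ := s0.filter (fun φ => φ ∈ qfDiagram M) with hs₂
  set χ := conjList s₂.toList with hχ
  have hχQF : χ.IsQF :=
    isQF_conjList _ fun φ hφ => ((Finset.mem_filter.1 (Finset.mem_toList.1 hφ)).2).1
  have hMχ : M ⊨ χ :=
    (realize_conjList _).2 fun φ hφ => ((Finset.mem_filter.1 (Finset.mem_toList.1 hφ)).2).2
  obtain ⟨S⟩ := key_satisfiable T M hM χ hχQF hMχ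
  haveI : S ⊨ (↑s0 : L[[M]].Theory) := by
    rw [Theory.model_iff]
    intro φ hφ
    rcases hs0 hφ with h | h
    · exact (Theory.model_union_iff.1 S.is_model).1.realize_of_mem φ h
    · have hmem : φ ∈ s₂ := Finset.mem_filter.2 ⟨hφ, h⟩
      have hSχ : S ⊨ χ :=
        Theory.model_singleton_iff.1 (Theory.model_union_iff.1 S.is_model).2
      exact (realize_conjList _).1 hSχ φ (Finset.mem_toList.2 hmem)
  exact Theory.Model.isSatisfiable S

end Main

/-- Embedding criterion: a structure embeds into some model of `T` iff it satisfies all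
universal consequences of `T`. -/
theorem embeds_into_model_iff_universalPart (T : L.Theory)
    (M : Type (max u v)) [L.Structure M] [Nonempty M] :
    (∃ (N : Type (max u v)) (_ : L.Structure N) (_ : Nonempty N),
      N ⊨ T ∧ Nonempty (M ↪[L] N)) ↔ M ⊨ universalPart T := by
  constructor
  · rintro ⟨N, iN, hNe, hNT, ⟨f⟩⟩
    rw [Theory.model_iff]
    rintro φ ⟨⟨n, χ, hQF, rfl⟩, hTφ⟩
    haveI := hNT
    have hN : N ⊨ χ.alls := hTφ.realize_sentence N
    have hN' : ∀ xs : Fin n → N, χ.Realize (default : Empty → N) xs :=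
      BoundedFormula.realize_alls.1 hN
    show Formula.Realize χ.alls (default : Empty → M)
    rw [BoundedFormula.realize_alls]
    intro xs
    refine (hQF.realize_embedding f (v := (default : Empty → M)) (xs := xs)).1 ?_
    have hd : ((f : M → N) ∘ (default : Empty → M)) = (default : Empty → N) :=
      Subsingleton.elim _ _
    rw [hd]
    exact hN' _
  · intro hM
    classical
    obtain ⟨N⟩ := qfDiagram_satisfiable T M hM
    letI iN : L.Structure N := (L.lhomWithConstants M).reduct N
    have hDreal : ∀ φ ∈ qfDiagram M, φ.Realize (N : Type _) := fun φ h =>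
      N.is_model.realize_of_mem φ (Set.mem_union_right _ h)
    haveI hexp : (L.lhomWithConstants M).IsExpansionOn (N : Type _) :=
      LHom.isExpansionOn_reduct _ _
    have hNT : (N : Type _) ⊨ T :=
      (LHom.onTheory_model (L.lhomWithConstants M) T).1
        (Theory.model_union_iff.1 N.is_model).1
    let f : M → N := fun m => ((L.con m : L[[M]].Constants) : N)
    have hinj : Function.Injective f := by
      intro m₁ m₂ h
      by_contra hne
      have hsent : ((Term.equal ((L.con m₁).term) ((L.con m₂).term)).not :
          L[[M]].Sentence) ∈ qfDiagram M := by
        constructor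
        · exact (BoundedFormula.IsAtomic.equal _ _).isQF.not
        · simp only [Sentence.Realize, Formula.realize_not, Formula.realize_equal,
            Term.realize_constants]
          exact hne
      have := hDreal _ hsent
      simp only [Sentence.Realize, Formula.realize_not, Formula.realize_equal,
        Term.realize_constants] at this
      exact this h
    have hfun : ∀ {n} (F : L.Functions n) (x : Fin n → M),
        f (funMap F x) = funMap F (f ∘ x) := by
      intro n F x
      have hsent : ((Term.equal (Term.func ((L.lhomWithConstants M).onFunction F)
          (fun i => (L.con (x i)).term)) ((L.con (funMap F x)).term)) :
          L[[M]].Sentence) ∈ qfDiagram M := by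
        constructor
        · exact (BoundedFormula.IsAtomic.equal _ _).isQF
        · simp only [Sentence.Realize, Formula.realize_equal, Term.realize_func,
            Term.realize_constants]
          rw [(L.lhomWithConstants M).map_onFunction]
          rfl
      have := hDreal _ hsent
      simp only [Sentence.Realize, Formula.realize_equal, Term.realize_func,
        Term.realize_constants] at this
      exact this.symm
    have hrel : ∀ {n} (R : L.Relations n) (x : Fin n → M),
        RelMap R (f ∘ x) ↔ RelMap R x := by
      intro n R x
      by_cases hR : RelMap R x
      · have hsent : ((((L.lhomWithConstants M).onRelation R).formula
            (fun i => (L.con (x i)).term)) : L[[M]].Sentence) ∈ qfDiagram M := by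
          constructor
          · exact (BoundedFormula.IsAtomic.rel _ _).isQF
          · simp only [Sentence.Realize, Formula.realize_rel, Term.realize_constants]
            rw [(L.lhomWithConstants M).map_onRelation]
            exact hR
        have := hDreal _ hsent
        simp only [Sentence.Realize, Formula.realize_rel, Term.realize_constants] at this
        exact ⟨fun _ => hR, fun _ => this⟩
      · have hsent : (((((L.lhomWithConstants M).onRelation R).formula
            (fun i => (L.con (x i)).term)).not) : L[[M]].Sentence) ∈ qfDiagram M := by
          constructor
          · exact (BoundedFormula.IsAtomic.rel _ _).isQF.not
          · simp only [Sentence.Realize, Formula.realize_not, Formula.realize_rel,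
              Term.realize_constants]
            rw [(L.lhomWithConstants M).map_onRelation]
            exact hR
        have := hDreal _ hsent
        simp only [Sentence.Realize, Formula.realize_not, Formula.realize_rel,
          Term.realize_constants] at this
        exact ⟨fun h => absurd h this, fun h => absurd h hR⟩
    exact ⟨N, iN, N.nonempty', hNT, ⟨⟨⟨f, hinj⟩, fun {n} F x => hfun F x,
      fun {n} R x => hrel R x⟩⟩⟩
end

section
/- If S is a model complete first-order theory and S and T have the same universal consequences (S_∀ = T_∀), then S is a model companion of T. -/
open FirstOrder FirstOrder.Language

universe u v

variable {L : FirstOrder.Language.{u, v}}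

section Auxiliary

open FirstOrder.Language.BoundedFormula

namespace ModelCompanionAux

theorem isQF_mapTermRel {L L' : FirstOrder.Language} {α β : Type*} {g : ℕ → ℕ}
    {ft : ∀ n, L.Term (α ⊕ Fin n) → L'.Term (β ⊕ Fin (g n))}
    {fr : ∀ n, L.Relations n → L'.Relations n}
    {h : ∀ n, L'.BoundedFormula β (g (n + 1)) → L'.BoundedFormula β (g n + 1)}
    {n} {φ : L.BoundedFormula α n} (hφ : φ.IsQF) :
    (φ.mapTermRel ft fr h).IsQF := by
  induction hφ with
  | falsum => exact IsQF.falsum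
  | of_isAtomic h' => cases h' with
    | equal => exact (IsAtomic.equal _ _).isQF
    | rel => exact (IsAtomic.rel _ _).isQF
  | imp _ _ ih1 ih2 => exact ih1.imp ih2

theorem isQF_restrictFreeVar {L : FirstOrder.Language} {α β : Type*} [DecidableEq α] :
    ∀ {n} {φ : L.BoundedFormula α n}, φ.IsQF → ∀ f : φ.freeVarFinset → β,
      (φ.restrictFreeVar f).IsQF := by
  intro n φ hφ
  induction hφ with
  | falsum => exact fun _ => IsQF.falsum
  | of_isAtomic h' => cases h' with
    | equal => exact fun _ => (IsAtomic.equal _ _).isQF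
    | rel => exact fun _ => (IsAtomic.rel _ _).isQF
  | imp _ _ ih1 ih2 => exact fun f => (ih1 _).imp (ih2 _)

theorem isQF_equivSentence_symm {L : FirstOrder.Language} {α : Type*} {φ : L[[α]].Sentence}
    (h : φ.IsQF) : (Formula.equivSentence.symm φ).IsQF := by
  simp only [Formula.equivSentence, Equiv.symm_symm, Equiv.trans_apply]
  exact isQF_mapTermRel (isQF_mapTermRel h)

theorem isQF_foldr_inf {L' : FirstOrder.Language} {α : Type*} {n : ℕ}
    {l : List (L'.BoundedFormula α n)}
    (h : ∀ φ ∈ l, φ.IsQF) : (l.foldr (· ⊓ ·) ⊤).IsQF := by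
  induction l with
  | nil => exact IsQF.top
  | cons a l ih =>
    exact IsQF.inf (h a List.mem_cons_self) (ih fun φ hφ => h φ (List.mem_cons_of_mem a hφ))

theorem sentence_realize_foldr_inf {L' : FirstOrder.Language} {M : Type*} [L'.Structure M]
    (l : List (L'.Sentence)) :
    M ⊨ (l.foldr (· ⊓ ·) ⊤) ↔ ∀ φ ∈ l, M ⊨ φ :=
  realize_foldr_inf l _ _

theorem formula_realize_restrictFreeVar {L : FirstOrder.Language} {α : Type*} [DecidableEq α]
    {M : Type*} [L.Structure M]
    {ψ : L.Formula α} {s : Set α} (h : ↑ψ.freeVarFinset ⊆ s) {v : α → M} :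
    Formula.Realize (ψ.restrictFreeVar (Set.inclusion h)) (v ∘ (↑)) ↔ ψ.Realize v :=
  realize_restrictFreeVar' h

/-- From a quantifier-free formula entailed by `T`, produce a universal consequence of `T`
that implies all its instances. -/
theorem exists_universal_sentence {α : Type (max u v)} {T : L.Theory}
    {ψ : L.Formula α} (hqf : ψ.IsQF) (hT : T ⊨ᵇ ψ) :
    ∃ σ : L.Sentence, σ ∈ universalPart T ∧
      ∀ (M : Type (max u v)) [L.Structure M] [Nonempty M], M ⊨ σ →
        ∀ v : α → M, ψ.Realize v := by
  classical
  have hsub : ↑ψ.freeVarFinset ⊆ (↑ψ.freeVarFinset : Set α) := Set.Subset.rfl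
  set ψ₀ : L.Formula ↥(↑ψ.freeVarFinset : Set α) := ψ.restrictFreeVar (Set.inclusion hsub)
    with hψ₀
  haveI : Finite ↥(↑ψ.freeVarFinset : Set α) := ψ.freeVarFinset.finite_toSet.to_subtype
  refine ⟨Formula.iAlls (α := Empty) _ (ψ₀.relabel Sum.inr), ⟨?_, ?_⟩, ?_⟩
  · unfold Formula.iAlls
    exact ⟨_, _, ((isQF_restrictFreeVar hqf _).relabel _).relabel _, rfl⟩
  · refine Theory.models_formula_iff.2 fun M0 v => ?_
    rw [Formula.realize_iAlls]
    intro i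
    set u : α → M0 := fun a =>
      if h : a ∈ ψ.freeVarFinset then i ⟨a, by simpa using h⟩ else Classical.arbitrary M0 with hu
    have hreal : ψ.Realize u := hT.realize_formula M0
    have hr2 : ψ₀.Realize (u ∘ (↑)) := (formula_realize_restrictFreeVar hsub).2 hreal
    have hfun : (u ∘ ((↑) : ↥(↑ψ.freeVarFinset : Set α) → α)) = fun x => i x := by
      funext x
      simp only [Function.comp_apply, hu]
      rw [dif_pos (by simpa using x.2)]
    rw [hfun] at hr2
    exact (Formula.realize_relabel).2 hr2
  · intro M _ _ hMσ v
    have h2 : (Formula.iAlls (α := Empty) _ (ψ₀.relabel Sum.inr)).Realize (default : Empty → M) := hMσ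
    rw [Formula.realize_iAlls] at h2
    exact (formula_realize_restrictFreeVar hsub).1
      ((Formula.realize_relabel (φ := ψ₀) (g := Sum.inr)).1 (h2 (fun x => v x)))

/-- The quantifier-free diagram of `M`. -/
def qfDiagram (M : Type (max u v)) [L.Structure M] : L[[M]].Theory :=
  {φ : L[[M]].Sentence | φ.IsQF ∧ M ⊨ φ}

theorem qfDiagram_union_sat (T : L.Theory) (M : Type (max u v)) [L.Structure M] [Nonempty M]
    (hM : ∀ σ ∈ universalPart T, M ⊨ σ) :
    ((L.lhomWithConstants M).onTheory T ∪ qfDiagram M).IsSatisfiable := by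
  classical
  rw [Theory.isSatisfiable_iff_isFinitelySatisfiable]
  intro T0 hT0
  set F : Finset (L[[M]].Sentence) := T0.filter (· ∈ qfDiagram M) with hF
  have hFD : ∀ φ ∈ F, φ ∈ qfDiagram M := fun φ hφ => (Finset.mem_filter.1 hφ).2
  set χ : L[[M]].Sentence := F.toList.foldr (· ⊓ ·) ⊤ with hχ
  have hχqf : χ.IsQF := isQF_foldr_inf fun φ hφ => (hFD φ (Finset.mem_toList.1 hφ)).1
  have hMχ : M ⊨ χ := (sentence_realize_foldr_inf _).2
    fun φ hφ => (hFD φ (Finset.mem_toList.1 hφ)).2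
  have hsat : ((L.lhomWithConstants M).onTheory T ∪ {χ}).IsSatisfiable := by
    by_contra hcon
    have hnot : (L.lhomWithConstants M).onTheory T ⊨ᵇ χ.not := by
      refine Theory.models_sentence_iff.2 fun M0 => ?_
      rw [Sentence.realize_not]
      intro hχM0
      refine hcon ⟨{ Carrier := M0, is_model := Theory.Model.union M0.is_model ?_ }⟩
      rw [Theory.model_iff]
      intro φ hφ
      rw [Set.mem_singleton_iff.1 hφ]
      exact hχM0
    have hTψ : T ⊨ᵇ Formula.equivSentence.symm χ.not := by
      rw [Theory.models_formula_iff_onTheory_models_equivSentence, Equiv.apply_symm_apply]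
      exact hnot
    obtain ⟨σ, hσmem, hσreal⟩ := exists_universal_sentence (isQF_equivSentence_symm hχqf.not) hTψ
    have hψreal := hσreal M (hM σ hσmem) (fun a => (L.con a : M))
    rw [Formula.realize_equivSentence_symm_con] at hψreal
    exact hψreal hMχ
  obtain ⟨N1⟩ := hsat
  haveI := N1.is_model
  have hN1χ : (N1 : Type _) ⊨ χ :=
    Theory.realize_sentence_of_mem ((L.lhomWithConstants M).onTheory T ∪ {χ})
      (Set.mem_union_right _ rfl)
  have hmod : (N1 : Type _) ⊨ (T0 : L[[M]].Theory) := by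
    rw [Theory.model_iff]
    intro φ hφ
    rcases hT0 hφ with h1 | h2
    · haveI := N1.is_model.mono (Set.subset_union_left (t := {χ}))
      exact Theory.realize_sentence_of_mem _ h1
    · have : φ ∈ F := Finset.mem_filter.2 ⟨by exact_mod_cast hφ, h2⟩
      exact (sentence_realize_foldr_inf _).1 hN1χ φ (Finset.mem_toList.2 this)
  exact Theory.Model.isSatisfiable N1

theorem exists_embedding_of_models_universalPart (T : L.Theory) (M : Type (max u v))
    [L.Structure M] [Nonempty M] (hM : ∀ σ ∈ universalPart T, M ⊨ σ) :
    ∃ (N : Type (max u v)) (_ : L.Structure N) (_ : Nonempty N),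
      N ⊨ T ∧ Nonempty (M ↪[L] N) := by
  classical
  obtain ⟨N0⟩ := qfDiagram_union_sat T M hM
  letI : L.Structure N0 := (L.lhomWithConstants M).reduct N0
  haveI : (L.lhomWithConstants M).IsExpansionOn N0 := LHom.isExpansionOn_reduct _ _
  have hNT : (N0 : Type _) ⊨ T :=
    (LHom.onTheory_model _ _).1 (N0.is_model.mono Set.subset_union_left)
  have hD : ∀ φ : L[[M]].Sentence, φ.IsQF → M ⊨ φ → (N0 : Type _) ⊨ φ := fun φ h1 h2 =>
    (Theory.model_iff _).1 (N0.is_model.mono Set.subset_union_right) φ ⟨h1, h2⟩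
  refine ⟨N0, _, inferInstance, hNT,
    ⟨⟨⟨fun m => ((L.con m : L[[M]].Constants) : N0), ?_⟩, ?_, ?_⟩⟩⟩
  · intro m₁ m₂ hEq
    by_contra hne
    have hMs : M ⊨ (Term.equal ((L.con m₁).term) ((L.con m₂).term) : L[[M]].Sentence).not := by
      simp only [Sentence.Realize, Term.equal, Formula.Realize, BoundedFormula.realize_not,
        BoundedFormula.realize_bdEqual, Term.realize_relabel, Term.realize_constants]
      exact hne
    have h2 := hD _ ((IsAtomic.equal _ _).isQF.not) hMs
    simp only [Sentence.Realize, Term.equal, Formula.Realize, BoundedFormula.realize_not,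
      BoundedFormula.realize_bdEqual, Term.realize_relabel, Term.realize_constants] at h2
    exact h2 hEq
  · intro n f x
    have hMs : M ⊨ (Term.equal (Term.func (Sum.inl f) (fun i => (L.con (x i)).term))
        ((L.con (Structure.funMap f x)).term) : L[[M]].Sentence) := by
      simp only [Sentence.Realize, Term.equal, Formula.Realize,
        BoundedFormula.realize_bdEqual, Term.realize_relabel, Term.realize_func,
        Term.realize_constants, withConstants_funMap_sumInl]
      rfl
    have h2 := hD _ ((IsAtomic.equal _ _).isQF) hMs
    simp only [Sentence.Realize, Term.equal, Formula.Realize,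
      BoundedFormula.realize_bdEqual, Term.realize_relabel, Term.realize_func,
      Term.realize_constants, withConstants_funMap_sumInl] at h2
    have h3 := h2.symm.trans (Term.realize_func _ _ _)
    simp only [Term.realize_constants] at h3
    exact h3.trans (@withConstants_funMap_sumInl L N0 _ M N0.struc this _ f (fun i => ((L.con (x i) : L[[M]].Constants) : N0)))
  · intro n r x
    by_cases hrel : Structure.RelMap r x
    · have hMs : M ⊨ (BoundedFormula.rel (Sum.inl r) (fun i => (L.con (x i)).term) :
          L[[M]].Sentence) := by
        simp only [Sentence.Realize, Formula.Realize, BoundedFormula.realize_rel,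
          Term.realize_constants, withConstants_relMap_sumInl]
        exact hrel
      have h2 := hD _ ((IsAtomic.rel _ _).isQF) hMs
      simp only [Sentence.Realize, Formula.Realize, BoundedFormula.realize_rel,
        Term.realize_constants, withConstants_relMap_sumInl] at h2
      have h3 := BoundedFormula.realize_rel.1 h2
      simp only [Term.realize_constants] at h3
      exact iff_of_true (Eq.mp (@withConstants_relMap_sumInl L N0 _ M N0.struc this _ r (fun i => ((L.con (x i) : L[[M]].Constants) : N0))) h3) hrel
    · have hMs : M ⊨ (BoundedFormula.rel (Sum.inl r) (fun i => (L.con (x i)).term) :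
          L[[M]].Sentence).not := by
        simp only [Sentence.Realize, Formula.Realize, BoundedFormula.realize_not,
          BoundedFormula.realize_rel, Term.realize_constants, withConstants_relMap_sumInl]
        exact hrel
      have h2 := hD _ ((IsAtomic.rel _ _).isQF.not) hMs
      simp only [Sentence.Realize, Formula.Realize, BoundedFormula.realize_not,
        BoundedFormula.realize_rel, Term.realize_constants, withConstants_relMap_sumInl] at h2
      exact iff_of_false (fun h3 => h2 (BoundedFormula.realize_rel.2 (by
        simp only [Term.realize_constants]
        exact Eq.mpr (@withConstants_relMap_sumInl L N0 _ M N0.struc this _ r (fun i => ((L.con (x i) : L[[M]].Constants) : N0))) h3))) hrel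

end ModelCompanionAux

end Auxiliary

/-- A model complete theory with the same universal consequences as `T` is a model
companion of `T`. -/
theorem isModelCompanion_of_modelComplete_of_universalPart_eq (S T : L.Theory)
    (hS : IsModelComplete S) (h : universalPart S = universalPart T) :
    IsModelCompanion T S := by
  refine ⟨hS, ?_, ?_⟩
  · intro M _ _ hMT
    haveI : M ⊨ T := hMT
    refine ModelCompanionAux.exists_embedding_of_models_universalPart S M fun σ hσ => ?_
    rw [h] at hσ
    exact hσ.2.realize_sentence M
  · intro M _ _ hMS
    haveI : M ⊨ S := hMS
    refine ModelCompanionAux.exists_embedding_of_models_universalPart T M fun σ hσ => ?_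
    rw [← h] at hσ
    exact hσ.2.realize_sentence M
end
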